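/- For every integer m ≥ 1, the 2m-th Bernoulli number satisfies B_{2m} = ((-1)^{m-1} / 2^{2m+1}) · ∫_{-∞}^{+∞} ( d^{m-1}/dx^{m-1} (sech x)² )² dx, where the integrand is the square of the (m-1)-st derivative of the function x ↦ sech² x = (1/cosh x)² on the real line. -/

import Mathlib

open MeasureTheory Real Finset Polynomial

namespace BSech


/-- rational factorial -/
def fq (i : ℕ) : ℚ := (Nat.factorial i : ℚ)

lemma fq_succ (i : ℕ) : fq (i+1) = (i+1) * fq i := by
  simp [fq, Nat.factorial_succ]
@[simp] lemma fq_zero : fq 0 = 1 := by simp [fq]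

def St : ℕ → ℕ → ℚ
  | 0, 0 => 1
  | 0, _+1 => 0
  | _+1, 0 => 0
  | p+1, k+1 => (k+1) * St p (k+1) + St p k

@[simp] lemma St_zero_zero : St 0 0 = 1 := rfl
@[simp] lemma St_zero_succ (k : ℕ) : St 0 (k+1) = 0 := rfl
@[simp] lemma St_succ_zero (p : ℕ) : St (p+1) 0 = 0 := rfl
lemma St_succ_succ (p k : ℕ) : St (p+1) (k+1) = (k+1) * St p (k+1) + St p k := rfl

lemma St_eq_zero : ∀ p k, p < k → St p k = 0
  | 0, 0 => by omega
  | 0, k+1 => fun _ => rfl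
  | p+1, 0 => by omega
  | p+1, k+1 => fun h => by
      rw [St_succ_succ, St_eq_zero p (k+1) (by omega), St_eq_zero p k (by omega)]
      ring

lemma St_zero_right (n : ℕ) : St n 0 = if n = 0 then 1 else 0 := by
  cases n <;> simp

/-- the inner "S2" identity -/
lemma sum_S2 (n : ℕ) :
    ∑ i ∈ range (n+1), (-1:ℚ)^i * fq i * St (n+1) (i+1) = if n = 0 then 1 else 0 := by
  have expand : ∀ i ∈ range (n+1), (-1:ℚ)^i * fq i * St (n+1) (i+1)
      = -((-1:ℚ)^(i+1) * fq (i+1) * St n (i+1)) + (-1:ℚ)^i * fq i * St n i := by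
    intro i _
    rw [St_succ_succ, fq_succ]
    ring
  rw [Finset.sum_congr rfl expand, Finset.sum_add_distrib]
  have h1 : ∑ i ∈ range (n+1), -((-1:ℚ)^(i+1) * fq (i+1) * St n (i+1))
      = -(∑ i ∈ range (n+2), (-1:ℚ)^i * fq i * St n i) + St n 0 := by
    rw [Finset.sum_range_succ' (fun i => (-1:ℚ)^i * fq i * St n i) (n+1), neg_add]
    simp [Finset.sum_neg_distrib]
  rw [h1]
  rw [Finset.sum_range_succ (fun i => (-1:ℚ)^i * fq i * St n i) (n+1),
    St_eq_zero n (n+1) (by omega), St_zero_right]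
  by_cases hn : n = 0 <;> simp [hn]

/-- the "S1" identity: binomial sums of Stirling numbers -/
lemma sum_S1 (n : ℕ) : ∀ k, ∑ q ∈ range (n+1), (n.choose q : ℚ) * St q k = St (n+1) (k+1) := by
  induction n with
  | zero =>
    intro k
    rw [St_succ_succ]
    cases k <;> simp
  | succ n ih =>
    intro k
    rw [Finset.sum_range_succ' (fun q => ((n+1).choose q : ℚ) * St q k) (n+1)]
    have step : ∀ q ∈ range (n+1), (((n+1).choose (q+1) : ℕ) : ℚ) * St (q+1) k
        = (n.choose q : ℚ) * St (q+1) k + (n.choose (q+1) : ℚ) * St (q+1) k := by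
      intro q _
      rw [Nat.choose_succ_succ]
      push_cast
      ring
    rw [Finset.sum_congr rfl step, Finset.sum_add_distrib]
    have hB : (∑ q ∈ range (n+1), (n.choose (q+1) : ℚ) * St (q+1) k)
        + ((n+1).choose 0 : ℚ) * St 0 k = St (n+1) (k+1) := by
      have htr : ∑ q ∈ range (n+1), (n.choose (q+1):ℚ) * St (q+1) k
          = ∑ q ∈ range n, (n.choose (q+1):ℚ) * St (q+1) k := by
        rw [Finset.sum_range_succ, Nat.choose_succ_self]; simp
      rw [htr, ← ih k, Finset.sum_range_succ' (fun q => (n.choose q : ℚ) * St q k) n]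
      simp
    have hA : ∑ q ∈ range (n+1), (n.choose q : ℚ) * St (q+1) k
        = (k:ℚ) * St (n+1) (k+1) + St (n+1) k := by
      cases k with
      | zero =>
        simp
      | succ k' =>
        have : ∀ q ∈ range (n+1), (n.choose q : ℚ) * St (q+1) (k'+1)
            = (k'+1) * ((n.choose q : ℚ) * St q (k'+1)) + (n.choose q : ℚ) * St q k' := by
          intro q _; rw [St_succ_succ]; ring
        rw [Finset.sum_congr rfl this, Finset.sum_add_distrib, ← Finset.mul_sum, ih, ih]
        push_cast
        ring
    rw [hA, add_assoc, hB, St_succ_succ (n+1) k]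
    ring



noncomputable def bW (q : ℕ) : ℚ := ∑ k ∈ range (q+1), (-1:ℚ)^k * fq k * St q k / (k+1)

lemma bW_extend (q n : ℕ) (h : q < n) :
    bW q = ∑ k ∈ range n, (-1:ℚ)^k * fq k * St q k / (k+1) := by
  rw [bW]
  apply Finset.sum_subset
  · intro x hx; simp only [mem_range] at *; omega
  · intro x _ hx
    simp only [mem_range, not_lt] at hx
    rw [St_eq_zero q x (by omega)]
    simp

lemma sum_bW (n : ℕ) :
    ∑ q ∈ range n, (n.choose q : ℚ) * bW q = if n = 1 then 1 else 0 := by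
  have h1 : ∑ q ∈ range n, (n.choose q : ℚ) * bW q
      = ∑ q ∈ range n, ∑ k ∈ range n, (n.choose q : ℚ) * ((-1:ℚ)^k * fq k * St q k / (k+1)) := by
    refine Finset.sum_congr rfl fun q hq => ?_
    rw [bW_extend q n (mem_range.mp hq), Finset.mul_sum]
  rw [h1, Finset.sum_comm]
  have h2 : ∀ k ∈ range n, ∑ q ∈ range n, (n.choose q : ℚ) * ((-1:ℚ)^k * fq k * St q k / (k+1))
      = (-1:ℚ)^k * fq k * St n (k+1) := by
    intro k _
    have hsum : ∑ q ∈ range n, (n.choose q : ℚ) * St q k = (k+1) * St n (k+1) := by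
      have := sum_S1 n k
      rw [Finset.sum_range_succ, Nat.choose_self, St_succ_succ n k] at this
      have h' : (1:ℚ) * St n k = St n k := one_mul _
      push_cast at this ⊢
      linarith
    have hk : ((k:ℚ)+1) ≠ 0 := by positivity
    calc ∑ q ∈ range n, (n.choose q : ℚ) * ((-1:ℚ)^k * fq k * St q k / (k+1))
        = ((-1:ℚ)^k * fq k / (k+1)) * ∑ q ∈ range n, (n.choose q : ℚ) * St q k := by
          rw [Finset.mul_sum]; refine Finset.sum_congr rfl fun q _ => by ring
      _ = (-1:ℚ)^k * fq k * St n (k+1) := by rw [hsum]; field_simp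
  rw [Finset.sum_congr rfl h2]
  cases n with
  | zero => simp
  | succ n' =>
    rw [sum_S2 n']
    by_cases h : n' = 0 <;> simp [h]

theorem worpitzky (q : ℕ) : _root_.bernoulli q = bW q := by
  induction q using Nat.strong_induction_on with
  | _ q ih =>
    have h1 := sum_bW (q+1)
    have h2 := _root_.sum_bernoulli (q+1)
    rw [Finset.sum_range_succ] at h1 h2
    have h3 : ∑ k ∈ range q, ((q+1).choose k : ℚ) * bW k
        = ∑ k ∈ range q, ((q+1).choose k : ℚ) * _root_.bernoulli k := by
      refine Finset.sum_congr rfl fun k hk => ?_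
      rw [ih k (mem_range.mp hk)]
    rw [h3] at h1
    have h4 : (((q+1).choose q : ℕ) : ℚ) * bW q = (((q+1).choose q : ℕ) : ℚ) * _root_.bernoulli q := by
      linarith [h1, h2]
    have h5 : (((q+1).choose q : ℕ) : ℚ) ≠ 0 := by
      have : (q+1).choose q = q+1 := Nat.choose_succ_self_right q
      rw [this]
      positivity
    exact (mul_left_cancel₀ h5 h4).symm

theorem W2 (q : ℕ) : _root_.bernoulli (q+1)
    = ∑ k ∈ range (q+1), (-1:ℚ)^(k+1) * fq k * St q k / ((k+1)*(k+2)) := by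
  rw [worpitzky (q+1), bW, Finset.sum_range_succ' _ (q+1)]
  simp only [St_succ_zero, mul_zero, zero_div, add_zero, Nat.cast_add, Nat.cast_one,
    Nat.cast_zero]
  set C : ℕ → ℚ := fun k => (-1:ℚ)^k * (k:ℚ) * fq k * St q k / (k+1) with hC
  have hterm : ∀ k ∈ range (q+1),
      (-1:ℚ)^(k+1) * fq (k+1) * St (q+1) (k+1) / ((k:ℚ)+1+1)
      = (C (k+1) - C k) + (-1:ℚ)^(k+1) * fq k * St q k / (((k:ℚ)+1)*((k:ℚ)+2)) := by
    intro k _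
    rw [hC]
    simp only []
    rw [St_succ_succ q k, fq_succ k]
    have hk1 : ((k:ℚ)+1) ≠ 0 := by positivity
    have hk2 : ((k:ℚ)+2) ≠ 0 := by positivity
    push_cast
    field_simp
    ring
  rw [Finset.sum_congr rfl hterm, Finset.sum_add_distrib, Finset.sum_range_sub C (q+1)]
  have hCq : C (q+1) = 0 := by
    rw [hC]; simp only []
    rw [St_eq_zero q (q+1) (by omega)]
    simp
  have hC0 : C 0 = 0 := by rw [hC]; simp
  rw [hCq, hC0, sub_zero, zero_add]

noncomputable def Pp : ℕ → Polynomial ℚ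
  | 0 => X - X^2
  | p+1 => (X^2 - X) * derivative (Pp p)

noncomputable def Qq : ℕ → Polynomial ℚ
  | 0 => 1
  | p+1 => -derivative (Pp p)

lemma Pp_succ (p : ℕ) : Pp (p+1) = (X^2 - X) * derivative (Pp p) := rfl

lemma Pp_eq_mul (p : ℕ) : Pp p = (X - X^2) * Qq p := by
  cases p with
  | zero => show X - X^2 = (X - X^2) * 1; ring
  | succ p => show (X^2 - X) * derivative (Pp p) = (X - X^2) * -derivative (Pp p); ring

lemma Pp_eval_zero (p : ℕ) : (Pp p).eval 0 = 0 := by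
  rw [Pp_eq_mul]; simp

lemma Pp_eval_one (p : ℕ) : (Pp p).eval 1 = 0 := by
  rw [Pp_eq_mul]; simp

/-- T j = (1-X)^(j+1) * X -/
noncomputable def T (j : ℕ) : Polynomial ℚ := (1 - X)^(j+1) * X

lemma key_deriv (j : ℕ) :
    (X^2 - X) * derivative (T j) = ((j:ℚ)+1) • T j - ((j:ℚ)+2) • T (j+1) := by
  rw [T, T]
  rw [derivative_mul, derivative_pow, derivative_X, derivative_sub, derivative_one,
    derivative_X]
  simp only [zero_sub, mul_one, smul_eq_C_mul]
  have h1 : (1 - X : Polynomial ℚ)^(j+1) = (1-X)^j * (1-X) := by ring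
  have h2 : (1 - X : Polynomial ℚ)^(j+2) = (1-X)^j * (1-X)^2 := by ring
  rw [h1, h2]
  have e1 : ((j:ℚ)+1) = (j:ℚ) + 1 := rfl
  have hc1 : (C ((j:ℚ)+1) : Polynomial ℚ) = C (j:ℚ) + 1 := by rw [C_add, C_1]
  have hc2 : (C ((j:ℚ)+2) : Polynomial ℚ) = C (j:ℚ) + 1 + 1 := by
    have : ((j:ℚ)+2) = ((j:ℚ)+1)+1 := by ring
    rw [this, C_add, C_add, C_1]
  push_cast
  rw [hc1, hc2]
  ring

/-- coefficient in the expansion -/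
noncomputable def dd (p j : ℕ) : ℚ := (-1:ℚ)^j * fq (j+1) * St (p+1) (j+1)

lemma Pp_expansion (p : ℕ) : Pp p = ∑ j ∈ range (p+1), dd p j • T j := by
  induction p with
  | zero =>
    show X - X^2 = _
    rw [Finset.sum_range_one]
    have : dd 0 0 = 1 := by
      rw [dd, St_succ_succ]
      simp [fq_succ]
    rw [this, one_smul, T]
    ring
  | succ p ih =>
    rw [Pp_succ, ih, derivative_sum, Finset.mul_sum]
    have hterm : ∀ j ∈ range (p+1), (X^2 - X) * derivative (dd p j • T j)
        = (dd p j * ((j:ℚ)+1)) • T j - (dd p j * ((j:ℚ)+2)) • T (j+1) := by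
      intro j _
      rw [derivative_smul]
      have : (X^2 - X) * (dd p j • derivative (T j)) = dd p j • ((X^2 - X) * derivative (T j)) := by
        rw [smul_eq_C_mul, smul_eq_C_mul]; ring
      rw [this, key_deriv, smul_sub, smul_smul, smul_smul]
    rw [Finset.sum_congr rfl hterm, Finset.sum_sub_distrib]
    have hA : ∑ j ∈ range (p+1), (dd p j * ((j:ℚ)+1)) • T j
        = ∑ j ∈ range (p+2), (dd p j * ((j:ℚ)+1)) • T j := by
      rw [Finset.sum_range_succ (fun j => (dd p j * ((j:ℚ)+1)) • T j) (p+1)]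
      have : dd p (p+1) = 0 := by
        rw [dd, St_eq_zero (p+1) (p+2) (by omega)]; ring
      rw [this]; simp
    rw [hA, Finset.sum_range_succ' (fun j => (dd p j * ((j:ℚ)+1)) • T j) (p+1),
      Finset.sum_range_succ' (fun j => dd (p+1) j • T j) (p+1), add_sub_right_comm,
      ← Finset.sum_sub_distrib]
    congr 1
    · refine Finset.sum_congr rfl fun i _ => ?_
      rw [← sub_smul]
      congr 1
      rw [dd, dd, dd, St_succ_succ (p+1) (i+1), fq_succ (i+1), fq_succ i]
      push_cast
      ring
    · rw [dd, dd, St_succ_succ (p+1) 0, St_succ_succ p 0]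
      simp

/-! ### Real polynomial layer -/

noncomputable def Pr (p : ℕ) : Polynomial ℝ := (Pp p).map (algebraMap ℚ ℝ)
noncomputable def Qr (p : ℕ) : Polynomial ℝ := (Qq p).map (algebraMap ℚ ℝ)

lemma Pr_succ (p : ℕ) : Pr (p+1) = (X^2 - X) * derivative (Pr p) := by
  rw [Pr, Pr, Pp_succ, Polynomial.map_mul, Polynomial.map_sub, Polynomial.map_pow,
    Polynomial.map_X, derivative_map]

lemma Pr_eq_mul (p : ℕ) : Pr p = (X - X^2) * Qr p := by
  rw [Pr, Qr, Pp_eq_mul, Polynomial.map_mul, Polynomial.map_sub, Polynomial.map_pow,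
    Polynomial.map_X]

@[simp] lemma Qr_zero : Qr 0 = 1 := by rw [Qr]; show (1 : Polynomial ℚ).map _ = 1; simp

lemma Qr_succ (p : ℕ) : Qr (p+1) = -derivative (Pr p) := by
  rw [Qr, Pr]; show (-derivative (Pp p)).map _ = _
  rw [Polynomial.map_neg, derivative_map]

lemma Pr_eval_zero (p : ℕ) : (Pr p).eval 0 = 0 := by rw [Pr_eq_mul]; simp

lemma Pr_eval_one (p : ℕ) : (Pr p).eval 1 = 0 := by rw [Pr_eq_mul]; simp

/-! ### The integral functional on polynomials -/

noncomputable def Iota (R : Polynomial ℝ) : ℝ := ∫ x in (0:ℝ)..1, R.eval x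

lemma Iota_derivative (R : Polynomial ℝ) : Iota (derivative R) = R.eval 1 - R.eval 0 := by
  rw [Iota]
  exact intervalIntegral.integral_eq_sub_of_hasDerivAt
    (fun x _ => R.hasDerivAt x)
    ((R.derivative.continuous).intervalIntegrable 0 1)

lemma Iota_neg (R : Polynomial ℝ) : Iota (-R) = -Iota R := by
  rw [Iota, Iota, ← intervalIntegral.integral_neg]
  simp

lemma Iota_add (R S : Polynomial ℝ) : Iota (R + S) = Iota R + Iota S := by
  rw [Iota, Iota, Iota, ← intervalIntegral.integral_add
    ((R.continuous).intervalIntegrable 0 1)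
    ((S.continuous).intervalIntegrable 0 1)]
  simp

/-- Integration by parts step. -/
lemma Iota_step (a b : ℕ) : Iota (Pr a * Qr (b+1)) = -Iota (Pr (a+1) * Qr b) := by
  have h1 : Pr a * Qr (b+1) = -(Pr a * derivative (Pr b)) := by rw [Qr_succ]; ring
  have h2 : Iota (derivative (Pr a * Pr b)) = 0 := by
    rw [Iota_derivative]
    simp [Pr_eval_zero, Pr_eval_one]
  rw [derivative_mul] at h2
  rw [Iota_add] at h2
  have h3 : derivative (Pr a) * Pr b = -(Pr (a+1) * Qr b) := by
    rw [Pr_eq_mul b, Pr_succ a]; ring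
  have h4 : Iota (derivative (Pr a) * Pr b) = -Iota (Pr (a+1) * Qr b) := by
    rw [h3, Iota_neg]
  calc Iota (Pr a * Qr (b+1)) = -Iota (Pr a * derivative (Pr b)) := by rw [h1, Iota_neg]
    _ = Iota (derivative (Pr a) * Pr b) := by linarith
    _ = -Iota (Pr (a+1) * Qr b) := h4

lemma Iota_chain (j : ℕ) : ∀ a b : ℕ, j ≤ b →
    Iota (Pr a * Qr b) = (-1:ℝ)^j * Iota (Pr (a+j) * Qr (b-j)) := by
  induction j with
  | zero => intro a b _; simp
  | succ j ih =>
    intro a b hj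
    obtain ⟨b', rfl⟩ : ∃ b', b = b' + 1 := ⟨b - 1, by omega⟩
    rw [Iota_step a b', ih (a+1) b' (by omega)]
    have : a + 1 + j = a + (j + 1) := by omega
    rw [this]
    have : b' + 1 - (j + 1) = b' - j := by omega
    rw [this]
    ring

/-! ### Evaluating `Iota (Pr (2m-2))` -/

lemma Iota_T (j : ℕ) : Iota ((1 - X : Polynomial ℝ)^(j+1) * X)
    = 1 / (((j:ℝ)+2) * ((j:ℝ)+3)) := by
  have hev : ∀ x : ℝ, (((1 - X : Polynomial ℝ)^(j+1) * X).eval x) = (1-x)^(j+1) * x := by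
    intro x; simp
  rw [Iota]
  rw [intervalIntegral.integral_congr (g := fun x : ℝ => (1-x)^(j+1) * x) (fun x _ => hev x)]
  have hcomp : ∫ x in (0:ℝ)..1, (1-x)^(j+1) * x
      = ∫ x in (0:ℝ)..1, x^(j+1) * (1-x) := by
    have := intervalIntegral.integral_comp_sub_left (a := (0:ℝ)) (b := 1)
      (fun x : ℝ => x^(j+1) * (1-x)) 1
    simp only [sub_zero, sub_self] at this
    rw [← this]
    apply intervalIntegral.integral_congr
    intro x _
    simp only []
    ring_nf
  rw [hcomp]
  have hsplit : ∫ x in (0:ℝ)..1, x^(j+1) * (1-x)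
      = (∫ x in (0:ℝ)..1, x^(j+1)) - ∫ x in (0:ℝ)..1, x^(j+2) := by
    rw [← intervalIntegral.integral_sub
      ((continuous_pow (j+1)).intervalIntegrable 0 1)
      ((continuous_pow (j+2)).intervalIntegrable 0 1)]
    apply intervalIntegral.integral_congr
    intro x _
    ring
  rw [hsplit, integral_pow, integral_pow]
  push_cast
  have h2 : ((j:ℝ)+2) ≠ 0 := by positivity
  have h3 : ((j:ℝ)+3) ≠ 0 := by positivity
  field_simp
  ring

lemma bernoulli_eq_sum_dd (p : ℕ) :
    (_root_.bernoulli (p+2) : ℚ) = ∑ j ∈ range (p+1), dd p j / (((j:ℚ)+2)*((j:ℚ)+3)) := by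
  have h := W2 (p+1)
  rw [Finset.sum_range_succ' _ (p+1)] at h
  simp only [St_succ_zero, mul_zero, zero_mul, zero_div, add_zero] at h
  rw [h]
  refine Finset.sum_congr rfl fun j _ => ?_
  rw [dd]
  push_cast
  have h1 : ((j:ℚ)+1+1) = (j:ℚ)+2 := by ring
  have h2 : ((j:ℚ)+1+2) = (j:ℚ)+3 := by ring
  rw [h1, h2]
  ring

lemma Iota_Pr (p : ℕ) : Iota (Pr p) = (_root_.bernoulli (p+2) : ℝ) := by
  have hmap : Pr p = ∑ j ∈ range (p+1),
      Polynomial.C ((dd p j : ℝ)) * ((1 - X : Polynomial ℝ)^(j+1) * X) := by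
    rw [Pr, Pp_expansion, Polynomial.map_sum]
    refine Finset.sum_congr rfl fun j _ => ?_
    rw [smul_eq_C_mul, T, Polynomial.map_mul, Polynomial.map_mul, Polynomial.map_C,
      Polynomial.map_pow, Polynomial.map_sub, Polynomial.map_one, Polynomial.map_X]
    rw [eq_ratCast]
  rw [hmap]
  have hIota_sum : Iota (∑ j ∈ range (p+1),
      Polynomial.C ((dd p j : ℝ)) * ((1 - X : Polynomial ℝ)^(j+1) * X))
      = ∑ j ∈ range (p+1), Iota (Polynomial.C ((dd p j : ℝ)) * ((1 - X)^(j+1) * X)) := by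
    rw [Iota]
    simp only [Polynomial.eval_finset_sum]
    rw [intervalIntegral.integral_finset_sum
      (fun i _ => ((Polynomial.continuous _).intervalIntegrable 0 1))]
    rfl
  rw [hIota_sum]
  have hterm : ∀ j ∈ range (p+1), Iota (Polynomial.C ((dd p j : ℝ)) * ((1 - X)^(j+1) * X))
      = (dd p j : ℝ) / (((j:ℝ)+2) * ((j:ℝ)+3)) := by
    intro j _
    have : Iota (Polynomial.C ((dd p j : ℝ)) * ((1 - X)^(j+1) * X))
        = (dd p j : ℝ) * Iota ((1 - X)^(j+1) * X) := by
      rw [Iota, Iota, ← intervalIntegral.integral_const_mul]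
      apply intervalIntegral.integral_congr
      intro x _
      simp
    rw [this, Iota_T]
    ring
  rw [Finset.sum_congr rfl hterm, bernoulli_eq_sum_dd p]
  push_cast
  rfl


/-! ### The sigmoid substitution -/

noncomputable def sg (x : ℝ) : ℝ := (1 + Real.exp (-2*x))⁻¹

lemma sg_pos (x : ℝ) : 0 < sg x := by
  rw [sg]
  have := Real.exp_pos (-2*x)
  positivity

lemma sg_lt_one (x : ℝ) : sg x < 1 := by
  rw [sg]
  have h := Real.exp_pos (-2*x)
  rw [inv_lt_one_iff₀]
  right; linarith

lemma one_add_exp_ne (x : ℝ) : 1 + Real.exp (-2*x) ≠ 0 := by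
  have := Real.exp_pos (-2*x); linarith

lemma hasDerivAt_sg (x : ℝ) : HasDerivAt sg (2 * (sg x - sg x ^ 2)) x := by
  have h1 : HasDerivAt (fun x : ℝ => -2*x) (-2) x := by
    simpa using (hasDerivAt_id x).const_mul (-2)
  have h2 : HasDerivAt (fun x : ℝ => Real.exp (-2*x)) (Real.exp (-2*x) * (-2)) x :=
    h1.exp
  have h3 : HasDerivAt (fun x : ℝ => 1 + Real.exp (-2*x)) (Real.exp (-2*x) * (-2)) x :=
    h2.const_add 1
  have h4 : HasDerivAt sg (-(Real.exp (-2*x) * (-2)) / (1 + Real.exp (-2*x))^2) x :=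
    h3.inv (one_add_exp_ne x)
  convert h4 using 1
  rw [sg]
  have hne := one_add_exp_ne x
  field_simp
  ring

lemma sech_sq_eq (x : ℝ) : (1 / Real.cosh x)^2 = 4 * (sg x - sg x ^ 2) := by
  rw [Real.cosh_eq, sg]
  have hxx : (-2*x) = (-x) + (-x) := by ring
  rw [hxx, Real.exp_add, Real.exp_neg]
  have h1 : Real.exp x ≠ 0 := (Real.exp_pos x).ne'
  have h2 : Real.exp x + (Real.exp x)⁻¹ ≠ 0 := by
    have := Real.exp_pos x
    have : 0 < Real.exp x + (Real.exp x)⁻¹ := by positivity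
    linarith
  have h3 : 1 + (Real.exp x)⁻¹ * (Real.exp x)⁻¹ ≠ 0 := by
    have := Real.exp_pos x
    have h4 : 0 < (Real.exp x)⁻¹ := by positivity
    nlinarith
  field_simp
  ring

lemma iteratedDeriv_sech (k : ℕ) :
    iteratedDeriv k (fun x : ℝ => (1 / Real.cosh x)^2)
      = fun x : ℝ => (4 * (-2:ℝ)^k) * (Pr k).eval (sg x) := by
  induction k with
  | zero =>
    funext x
    rw [iteratedDeriv_zero, sech_sq_eq]
    have : Pr 0 = X - X^2 := by
      rw [Pr]
      show (X - X^2 : Polynomial ℚ).map _ = _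
      rw [Polynomial.map_sub, Polynomial.map_pow, Polynomial.map_X]
    rw [this]
    simp only [Polynomial.eval_sub, Polynomial.eval_pow, Polynomial.eval_X, pow_zero, mul_one]
  | succ k ih =>
    funext x
    rw [iteratedDeriv_succ, ih]
    have hd : HasDerivAt (fun x : ℝ => (4 * (-2:ℝ)^k) * (Pr k).eval (sg x))
        ((4 * (-2:ℝ)^k) * ((derivative (Pr k)).eval (sg x) * (2 * (sg x - sg x ^ 2)))) x := by
      exact (((Pr k).hasDerivAt (sg x)).comp x (hasDerivAt_sg x)).const_mul _
    rw [hd.deriv]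
    rw [Pr_succ, Polynomial.eval_mul]
    simp only [Polynomial.eval_sub, Polynomial.eval_pow, Polynomial.eval_X]
    ring

lemma sg_image : sg '' Set.univ = Set.Ioo 0 1 := by
  apply Set.Subset.antisymm
  · rintro u ⟨x, -, rfl⟩
    exact ⟨sg_pos x, sg_lt_one x⟩
  · rintro u ⟨hu0, hu1⟩
    refine ⟨-(1/2) * Real.log (1/u - 1), Set.mem_univ _, ?_⟩
    rw [sg]
    have h1 : (0:ℝ) < 1/u - 1 := by
      rw [lt_sub_iff_add_lt, zero_add]
      rw [lt_div_iff₀ hu0, one_mul]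
      exact hu1
    have h2 : -2 * (-(1/2) * Real.log (1/u - 1)) = Real.log (1/u - 1) := by ring
    rw [h2, Real.exp_log h1]
    have : 1 + (1/u - 1) = 1/u := by ring
    rw [this]
    simp

lemma sg_injOn : Set.InjOn sg Set.univ := by
  intro x _ y _ hxy
  rw [sg, sg] at hxy
  have h1 : 1 + Real.exp (-2*x) = 1 + Real.exp (-2*y) :=
    inv_injective hxy
  have h2 : Real.exp (-2*x) = Real.exp (-2*y) := by linarith
  have h3 : -2*x = -2*y := Real.exp_injective h2
  linarith

end BSech

open MeasureTheory Real

theorem bernoulli_sech_integral (m : ℕ) (hm : 1 ≤ m) :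
    (bernoulli (2 * m) : ℝ) =
      ((-1 : ℝ) ^ (m - 1) / 2 ^ (2 * m + 1)) *
        ∫ x : ℝ, (iteratedDeriv (m - 1) (fun x : ℝ => (1 / Real.cosh x) ^ 2) x) ^ 2 := by
  obtain ⟨n, rfl⟩ : ∃ n, m = n + 1 := ⟨m - 1, by omega⟩
  open BSech in
  clear hm
  simp only [Nat.add_sub_cancel]
  -- rewrite the integrand
  have hint : ∀ x : ℝ, (iteratedDeriv n (fun x : ℝ => (1 / Real.cosh x) ^ 2) x) ^ 2
      = (16 * (4:ℝ)^n) * ((Pr n).eval (sg x))^2 := by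
    intro x
    rw [BSech.iteratedDeriv_sech n]
    have h42 : ((-2:ℝ)^n)^2 = 4^n := by
      rw [← pow_mul, mul_comm n 2, pow_mul]
      norm_num
    simp only []
    rw [mul_pow, mul_pow, h42]
    ring
  -- pointwise identity relating the square to the change-of-variables integrand
  have hPQ : ∀ x : ℝ, ((BSech.Pr n).eval (BSech.sg x))^2
      = |2 * (BSech.sg x - BSech.sg x ^ 2)| •
        ((fun u => (BSech.Pr n * BSech.Qr n).eval u / 2) (BSech.sg x)) := by
    intro x
    have h01 : 0 < BSech.sg x := BSech.sg_pos x
    have h11 : BSech.sg x < 1 := BSech.sg_lt_one x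
    have habs : |2 * (BSech.sg x - BSech.sg x ^ 2)| = 2 * (BSech.sg x - BSech.sg x ^ 2) := by
      rw [abs_of_pos]; nlinarith
    rw [habs]
    simp only [smul_eq_mul]
    have hsq : (BSech.Pr n)^2 = (X - X^2) * (BSech.Pr n * BSech.Qr n) := by
      calc (BSech.Pr n)^2 = ((X - X^2) * BSech.Qr n) * BSech.Pr n := by
            rw [← BSech.Pr_eq_mul]; ring
        _ = (X - X^2) * (BSech.Pr n * BSech.Qr n) := by ring
    have hev := congrArg (Polynomial.eval (BSech.sg x)) hsq
    simp only [Polynomial.eval_mul, Polynomial.eval_pow, Polynomial.eval_sub,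
      Polynomial.eval_X] at hev
    rw [hev]
    simp only [Polynomial.eval_mul]
    ring
  -- change of variables
  have hcov := MeasureTheory.integral_image_eq_integral_abs_deriv_smul MeasurableSet.univ
      (fun x _ => (BSech.hasDerivAt_sg x).hasDerivWithinAt) BSech.sg_injOn
      (fun u => (BSech.Pr n * BSech.Qr n).eval u / 2)
  rw [BSech.sg_image] at hcov
  have hIoo : ∫ u in Set.Ioo (0:ℝ) 1, (BSech.Pr n * BSech.Qr n).eval u / 2
      = BSech.Iota (BSech.Pr n * BSech.Qr n) / 2 := by
    rw [BSech.Iota, intervalIntegral.integral_of_le zero_le_one,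
      ← MeasureTheory.integral_Ioc_eq_integral_Ioo]
    rw [MeasureTheory.integral_div]
  have key : ∫ x : ℝ, ((BSech.Pr n).eval (BSech.sg x))^2
      = BSech.Iota (BSech.Pr n * BSech.Qr n) / 2 := by
    rw [← MeasureTheory.setIntegral_univ]
    rw [show (fun x : ℝ => ((BSech.Pr n).eval (BSech.sg x))^2)
        = fun x : ℝ => |2 * (BSech.sg x - BSech.sg x ^ 2)| •
          ((fun u => (BSech.Pr n * BSech.Qr n).eval u / 2) (BSech.sg x)) from funext hPQ]
    rw [← hcov, hIoo]
  -- evaluate Iota via the integration-by-parts chain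
  have hchain : BSech.Iota (BSech.Pr n * BSech.Qr n)
      = (-1:ℝ)^n * (bernoulli (2*n+2) : ℝ) := by
    have := BSech.Iota_chain n n n le_rfl
    rw [Nat.sub_self, BSech.Qr_zero, mul_one] at this
    rw [this]
    have h2n : n + n = 2*n := by ring
    rw [h2n, BSech.Iota_Pr (2*n)]
  -- assemble
  have hrw : (fun x : ℝ => (iteratedDeriv n (fun x : ℝ => (1 / Real.cosh x) ^ 2) x) ^ 2)
      = fun x : ℝ => (16 * (4:ℝ)^n) * ((BSech.Pr n).eval (BSech.sg x))^2 := funext hint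
  rw [hrw, MeasureTheory.integral_const_mul, key, hchain]
  have hidx : 2*(n+1) = 2*n+2 := by ring
  rw [hidx]
  have h4 : (4:ℝ)^n = 2^(2*n) := by
    rw [show (4:ℝ) = 2^2 by norm_num, ← pow_mul]
  have hsign : ((-1:ℝ)^n) * ((-1:ℝ)^n) = 1 := by
    rw [← pow_add]
    exact Even.neg_one_pow ⟨n, by ring⟩
  have hpow : (2:ℝ)^(2*n+2+1) = 2^(2*n) * 8 := by
    rw [show 2*n+2+1 = 2*n+3 by ring, pow_add]; norm_num
  rw [h4, hpow]
  have ht : (0:ℝ) < 2^(2*n) := by positivity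
  field_simp
  linear_combination (-(16 * ((_root_.bernoulli (2*n+2) : ℚ) : ℝ))) * hsign
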